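/- Let h be a Leibniz algebra and Π(h) = {(D^L,D^R) ∈ Der^L(h)⊕Der^R(h) | D^Lα + D^Rα ∈ Δ(h) ∀α}. Then the complex h → Π(h), α ↦ (ad^L_α, ad^R_α), with l₂ given by the semidirect bracket on Π(h), l₂((D^L,D^R),α) = D^L α, l₂(α,(D^L,D^R)) = D^R α, and l₃ = 0, is a strict Leibniz 2-algebra. -/

import Mathlib

variable {K : Type*} [Field K] {h : Type*} [AddCommGroup h] [Module K h]

/-- `Δ(h) = span{[α,α]_h : α ∈ h}`. -/
def squaresSpan (B : h →ₗ[K] h →ₗ[K] h) : Submodule K h :=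
  Submodule.span K {b : h | ∃ a : h, b = B a a}

/-- Membership in `Π(h)`: left derivation, right derivation, and
`DL α + DR α ∈ Δ(h)` for all `α`. -/
def InPi (B : h →ₗ[K] h →ₗ[K] h) (D : Module.End K h × Module.End K h) : Prop :=
  (∀ a b : h, D.1 (B a b) = B (D.1 a) b + B a (D.1 b)) ∧
  (∀ a b : h, D.2 (B a b) = B a (D.2 b) - B b (D.2 a)) ∧
  (∀ α : h, D.1 α + D.2 α ∈ squaresSpan B)

/-- The semidirect bracket on pairs of endomorphisms. -/
def sBracket (D E : Module.End K h × Module.End K h) :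
    Module.End K h × Module.End K h :=
  (⁅D.1, E.1⁆, ⁅D.1, E.2⁆)

lemma square_left_zero (B : h →ₗ[K] h →ₗ[K] h)
    (hleib : ∀ a b c : h, B a (B b c) = B (B a b) c + B b (B a c))
    {z : h} (hz : z ∈ squaresSpan B) (b : h) : B z b = 0 := by
  induction hz using Submodule.span_induction with
  | mem x hx =>
    obtain ⟨a, rfl⟩ := hx
    have := hleib a a b
    exact (right_eq_add.mp this)
  | zero => simp
  | add x y _ _ ihx ihy => simp [map_add, ihx, ihy]
  | smul c x _ ihx => simp [map_smul, ihx]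

lemma square_right_der_zero (B : h →ₗ[K] h →ₗ[K] h) (D2 : Module.End K h)
    (hD2 : ∀ a b : h, D2 (B a b) = B a (D2 b) - B b (D2 a))
    {z : h} (hz : z ∈ squaresSpan B) : D2 z = 0 := by
  induction hz using Submodule.span_induction with
  | mem x hx =>
    obtain ⟨a, rfl⟩ := hx
    simp [hD2 a a]
  | zero => simp
  | add x y _ _ ihx ihy => simp [map_add, ihx, ihy]
  | smul c x _ ihx => simp [map_smul, ihx]

lemma sq_mem (B : h →ₗ[K] h →ₗ[K] h) (a : h) : B a a ∈ squaresSpan B :=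
  Submodule.subset_span ⟨a, rfl⟩

lemma add_mem_sq (B : h →ₗ[K] h →ₗ[K] h) (α a : h) :
    B α a + B a α ∈ squaresSpan B := by
  have key : B α a + B a α = B (α + a) (α + a) - B α α - B a a := by
    simp [map_add]; abel
  rw [key]
  exact sub_mem (sub_mem (sq_mem B (α + a)) (sq_mem B α)) (sq_mem B a)

/-- Proposition 3.7: `(h, Π(h), d = (ad^L, ad^R), l₂, l₃ = 0)` is a strict
Leibniz 2-algebra, where `l₂` is the semidirect bracket on `Π(h)`,
`l₂(D, α) = D^L α` and `l₂(α, D) = D^R α`.  The conclusions list: `d` lands in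
`Π(h)`; conditions (a), (b), (c); the Leibniz identity for `l₂` on `Π(h)`
(condition (d) with `l₃ = 0`); and conditions (e₁), (e₂), (e₃) with `l₃ = 0`. -/
theorem Pi_strict_leibniz2
    (B : h →ₗ[K] h →ₗ[K] h)
    (hleib : ∀ a b c : h, B a (B b c) = B (B a b) c + B b (B a c)) :
    -- the differential α ↦ (ad^L_α, ad^R_α) lands in Π(h)
    (∀ α : h, InPi B (B α, B.flip α)) ∧
    -- (a): d l₂(D, α) = l₂(D, d α)
    (∀ D : Module.End K h × Module.End K h, InPi B D → ∀ α : h,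
      ((B (D.1 α) : Module.End K h), (B.flip (D.1 α) : Module.End K h)) =
        sBracket D (B α, B.flip α)) ∧
    -- (b): d l₂(α, D) = l₂(d α, D)
    (∀ D : Module.End K h × Module.End K h, InPi B D → ∀ α : h,
      ((B (D.2 α) : Module.End K h), (B.flip (D.2 α) : Module.End K h)) =
        sBracket (B α, B.flip α) D) ∧
    -- (c): l₂(d α, β) = l₂(α, d β)
    (∀ α β : h, (B α) β = (B.flip β) α) ∧
    -- (d) with l₃ = 0: the Leibniz identity for the bracket on Π(h)
    (∀ D E F : Module.End K h × Module.End K h,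
      InPi B D → InPi B E → InPi B F →
      sBracket D (sBracket E F) =
        sBracket (sBracket D E) F + sBracket E (sBracket D F)) ∧
    -- (e₁): l₂(D, l₂(E, α)) - l₂(l₂(D,E), α) - l₂(E, l₂(D, α)) = 0
    (∀ D E : Module.End K h × Module.End K h, InPi B D → InPi B E → ∀ α : h,
      D.1 (E.1 α) - (sBracket D E).1 α - E.1 (D.1 α) = 0) ∧
    -- (e₂): l₂(D, l₂(α, E)) - l₂(l₂(D, α), E) - l₂(α, l₂(D, E)) = 0
    (∀ D E : Module.End K h × Module.End K h, InPi B D → InPi B E → ∀ α : h,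
      D.1 (E.2 α) - E.2 (D.1 α) - (sBracket D E).2 α = 0) ∧
    -- (e₃): l₂(α, l₂(D, E)) - l₂(l₂(α, D), E) - l₂(D, l₂(α, E)) = 0
    (∀ D E : Module.End K h × Module.End K h, InPi B D → InPi B E → ∀ α : h,
      (sBracket D E).2 α - E.2 (D.2 α) - D.1 (E.2 α) = 0) := by
  refine ⟨?_, ?_, ?_, ?_, ?_, ?_, ?_, ?_⟩
  · intro α
    refine ⟨fun a b => hleib α a b, fun a b => ?_, fun a => add_mem_sq B α a⟩
    have := hleib a b α
    simp only [LinearMap.flip_apply]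
    rw [this]; abel
  · intro D hD α
    ext b
    · simp only [sBracket, Ring.lie_def, LinearMap.sub_apply, Module.End.mul_apply,
        LinearMap.flip_apply]
      rw [hD.1 α b]; abel
    · simp only [sBracket, Ring.lie_def, LinearMap.sub_apply, Module.End.mul_apply,
        LinearMap.flip_apply]
      rw [hD.1 b α]; abel
  · intro D hD α
    have hz : ∀ β : h, D.1 β + D.2 β ∈ squaresSpan B := hD.2.2
    ext b
    · simp only [sBracket, Ring.lie_def, LinearMap.sub_apply, Module.End.mul_apply,
        LinearMap.flip_apply]
      have h1 := hD.1 α b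
      have h2 : B (D.1 α + D.2 α) b = 0 := square_left_zero B hleib (hz α) b
      rw [map_add] at h2
      simp only [LinearMap.add_apply] at h2
      rw [h1]
      have hneg : B (D.2 α) b = -(B (D.1 α) b) := by
        rw [eq_neg_iff_add_eq_zero, add_comm]; exact h2
      rw [hneg]; abel
    · simp only [sBracket, Ring.lie_def, LinearMap.sub_apply, Module.End.mul_apply,
        LinearMap.flip_apply]
      have h2 := hD.2.1 α b
      rw [h2]; abel
  · intro α β; simp
  · intro D E F _ _ _
    refine Prod.ext ?_ ?_ <;>
      simp only [sBracket, Prod.fst_add, Prod.snd_add] <;>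
      exact @LieRing.leibniz_lie (Module.End K h) LieRing.ofAssociativeRing _ _ _
  · intro D E _ _ α
    simp only [sBracket, Ring.lie_def, LinearMap.sub_apply, Module.End.mul_apply]
    abel
  · intro D E _ _ α
    simp only [sBracket, Ring.lie_def, LinearMap.sub_apply, Module.End.mul_apply]
    abel
  · intro D E hD hE α
    simp only [sBracket, Ring.lie_def, LinearMap.sub_apply, Module.End.mul_apply]
    have h2 : E.2 (D.1 α + D.2 α) = 0 :=
      square_right_der_zero B E.2 hE.2.1 (hD.2.2 α)
    rw [map_add] at h2
    have hneg : E.2 (D.2 α) = -(E.2 (D.1 α)) := by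
      rw [eq_neg_iff_add_eq_zero, add_comm]; exact h2
    rw [hneg]; abel
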